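/- Let Γ be a group with automorphisms α₀, α₁ and G = LΓ ⋊ V the twisted fraction group. For ζ in the center Z(Γ), the formula F_ζ(av) := ζ^{ℓ_v} · a · v, where ℓ_v(x) = log₂(v'(v^{-1}x)) and ζ^{ℓ_v}(x) := ζ^{ℓ_v(x)}, defines an automorphism of G, and ζ ↦ F_ζ is a faithful action of Z(Γ) on G by automorphisms. (Stated for the untwisted case α₀ = α₁ = id_Γ.) -/

import Mathlib

/-! Basic setup: the Cantor space, prefix replacement, Thompson's group `V`,
slopes, dyadic rationals, standard dyadic partitions, locally constant maps,
and the permutation model of the twisted fraction groups `LΓ ⋊ V`. -/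

abbrev Cantor : Type := ℕ → Bool

/-- Concatenation of a finite word with an infinite sequence. -/
def cat (w : List Bool) (x : Cantor) : Cantor :=
  fun n => if n < w.length then w.getD n false else x (n - w.length)

/-- The standard dyadic interval (cylinder) associated to a finite word. -/
def cyl (w : List Bool) : Set Cantor := {x | ∃ y : Cantor, x = cat w y}

/-- Membership in Thompson's group `V`: a homeomorphism of the Cantor space which is
everywhere locally given by prefix replacement. -/
def memV (v : Cantor ≃ₜ Cantor) : Prop :=
  ∀ x : Cantor, ∃ (m w : List Bool) (y : Cantor),
    x = cat m y ∧ ∀ z : Cantor, v (cat m z) = cat w z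

/-- `HasLogSlope v x k` : `k = log₂ v'(x)`, base-2 logarithm of the slope of `v` at `x`. -/
def HasLogSlope (v : Cantor ≃ₜ Cantor) (x : Cantor) (k : ℤ) : Prop :=
  ∃ (m w : List Bool) (y : Cantor),
    x = cat m y ∧ (∀ z : Cantor, v (cat m z) = cat w z) ∧
      k = (m.length : ℤ) - (w.length : ℤ)

open Classical in
noncomputable def logSlope (v : Cantor ≃ₜ Cantor) (x : Cantor) : ℤ :=
  if h : ∃ k : ℤ, HasLogSlope v x k then h.choose else 0

/-- The eventually periodic sequence `c∞ = c·c·c⋯`. -/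
def tailSeq (c : List Bool) : Cantor := fun n => c.getD (n % c.length) false

/-- `x` lies in the tail equivalence class of the word `c`, i.e. `x = y·c∞`. -/
def InTailClass (x : Cantor) (c : List Bool) : Prop :=
  ∃ y : List Bool, x = cat y (tailSeq c)

/-- `x` is eventually periodic (a rational point of the Cantor space). -/
def EvPeriodic (x : Cantor) : Prop :=
  ∃ (y c : List Bool), c ≠ [] ∧ x = cat y (tailSeq c)

/-- A prime word: a nonempty word which is not a proper power of a word. -/
def PrimeWord (c : List Bool) : Prop :=
  c ≠ [] ∧ ∀ (d : List Bool) (k : ℕ), 2 ≤ k → c ≠ (List.replicate k d).flatten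

/-- `conjH φ v = φ ∘ v ∘ φ⁻¹`. -/
def conjH (φ v : Cantor ≃ₜ Cantor) : Cantor ≃ₜ Cantor := φ.symm.trans (v.trans φ)

/-- `φ` normalizes Thompson's group `V` inside `Homeo(𝔠)` : `φ V φ⁻¹ = V`. -/
def NormalizesV (φ : Cantor ≃ₜ Cantor) : Prop :=
  (conjH φ) '' {v | memV v} = {v | memV v}

/-- The copy of the dyadic rationals `Q₂ ⊂ 𝔠` : finitely supported sequences. -/
def InQ2 (x : Cantor) : Prop := ∃ n : ℕ, ∀ m, n ≤ m → x m = false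

def zeroSeq : Cantor := fun _ => false

/-- A standard dyadic partition of the Cantor space. -/
def IsSDP (P : Finset (List Bool)) : Prop :=
  ∀ x : Cantor, ∃! w : List Bool, w ∈ P ∧ x ∈ cyl w

/-- Locally constant map: constant on each piece of some standard dyadic partition. -/
def IsLC {Γ : Type*} (f : Cantor → Γ) : Prop :=
  ∃ P : Finset (List Bool), IsSDP P ∧ ∀ w ∈ P, ∀ y z : Cantor, f (cat w y) = f (cat w z)

/-- `h` agrees on `Q₂` with (the restriction of) a locally constant map. -/
def AgreesOnQ2WithLC {Γ : Type*} (h : Cantor → Γ) : Prop :=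
  ∃ b : Cantor → Γ, IsLC b ∧ ∀ x, InQ2 x → h x = b x

section GroupPart
variable {Γ : Type*} [Group Γ]

/-- `alphaWord α₀ α₁ (m₁⋯m_k) = α_{m_k} ∘ ⋯ ∘ α_{m₁}`. -/
def alphaWord (α₀ α₁ : Γ ≃* Γ) (m : List Bool) : Γ ≃* Γ :=
  m.foldl (fun acc b => acc.trans (if b then α₁ else α₀)) (MulEquiv.refl Γ)

open Classical in
/-- The twisting automorphism `τ_{v,x} = α_{v(I)}⁻¹ ∘ α_I` for a standard dyadic
interval `I` containing `x` and adapted to `v`. -/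
noncomputable def tauEquiv (α₀ α₁ : Γ ≃* Γ) (v : Cantor ≃ₜ Cantor) (x : Cantor) : Γ ≃* Γ :=
  if h : ∃ p : List Bool × List Bool, x ∈ cyl p.1 ∧ ∀ z : Cantor, v (cat p.1 z) = cat p.2 z
  then (alphaWord α₀ α₁ h.choose.1).trans (alphaWord α₀ α₁ h.choose.2).symm
  else MulEquiv.refl Γ

/-- The element `a·v` of the twisted `LΓ ⋊ V`, realized as the permutation
`(x,g) ↦ (v x, a(v x) · τ_{v,x}(g))` of `𝔠 × Γ`. -/
noncomputable def permOf (α₀ α₁ : Γ ≃* Γ) (a : Cantor → Γ) (v : Cantor ≃ₜ Cantor) :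
    Equiv.Perm (Cantor × Γ) where
  toFun p := (v p.1, a (v p.1) * tauEquiv α₀ α₁ v p.1 p.2)
  invFun p := (v.symm p.1, (tauEquiv α₀ α₁ v (v.symm p.1)).symm ((a p.1)⁻¹ * p.2))
  left_inv := by rintro ⟨x, g⟩; simp
  right_inv := by rintro ⟨x, g⟩; simp

end GroupPart

/-- The twisted fraction group `G = LΓ ⋊ V` of the triple `(Γ, α₀, α₁)`,
as a group of permutations of `𝔠 × Γ`. -/
noncomputable def Gsub (Γ : Type*) [Group Γ] (α₀ α₁ : Γ ≃* Γ) :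
    Subgroup (Equiv.Perm (Cantor × Γ)) :=
  Subgroup.closure {p | ∃ a v, IsLC a ∧ memV v ∧ p = permOf α₀ α₁ a v}

/-- The untwisted case `α₀ = α₁ = id`. -/
noncomputable def permOfU {Γ : Type*} [Group Γ] (a : Cantor → Γ) (v : Cantor ≃ₜ Cantor) :=
  permOf (MulEquiv.refl Γ) (MulEquiv.refl Γ) a v

/-- The untwisted fraction group `G = LΓ ⋊ V`. -/
noncomputable def GsubU (Γ : Type*) [Group Γ] := Gsub Γ (MulEquiv.refl Γ) (MulEquiv.refl Γ)

/-- `f ∈ N_{K̄}(G)` : the element `f` of `K̄ = ∏_{Q₂}Γ` normalizes `G = LΓ ⋊ V`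
(untwisted case), i.e. `f·a·(f^v)⁻¹` and `f⁻¹·a·f^v` are locally constant on `Q₂`. -/
def InNormKbar {Γ : Type*} [Group Γ] (f : Cantor → Γ) : Prop :=
  ∀ (a : Cantor → Γ) (v : Cantor ≃ₜ Cantor), IsLC a → memV v →
    AgreesOnQ2WithLC (fun x => f x * a x * (f (v.symm x))⁻¹) ∧
    AgreesOnQ2WithLC (fun x => (f x)⁻¹ * a x * f (v.symm x))


section AuxProof
variable {Γ : Type*} [Group Γ]


def shiftC (k : ℕ) (x : Cantor) : Cantor := fun n => x (n + k)

lemma cat_lt (w : List Bool) (x : Cantor) {n : ℕ} (h : n < w.length) :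
    cat w x n = w.getD n false := by simp [cat, h]

lemma cat_ge (w : List Bool) (x : Cantor) {n : ℕ} (h : w.length ≤ n) :
    cat w x n = x (n - w.length) := by simp [cat, Nat.not_lt.mpr h]

lemma cat_add (w : List Bool) (x : Cantor) (n : ℕ) :
    cat w x (n + w.length) = x n := by
  rw [cat_ge w x (by omega)]; congr 1; omega

lemma cat_nil (x : Cantor) : cat [] x = x := by
  funext n; simp [cat]

lemma cat_append (m t : List Bool) (z : Cantor) :
    cat (m ++ t) z = cat m (cat t z) := by
  funext n
  rcases lt_or_ge n m.length with h | h
  · rw [cat_lt _ _ (by simp; omega), cat_lt _ _ h]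
    rw [List.getD_eq_getElem _ _ (by simp; omega), List.getD_eq_getElem _ _ h]
    rw [List.getElem_append_left h]
  · rw [cat_ge _ _ h]
    rcases lt_or_ge n (m.length + t.length) with h2 | h2
    · rw [cat_lt _ _ (by simp; omega), cat_lt _ _ (by omega)]
      rw [List.getD_eq_getElem _ _ (by simp; omega), List.getD_eq_getElem _ _ (by omega)]
      rw [List.getElem_append_right h]
    · rw [cat_ge _ _ (by simp; omega), cat_ge _ _ (by omega)]
      congr 1; simp; omega

lemma cat_left_cancel {w : List Bool} {y y' : Cantor} (h : cat w y = cat w y') : y = y' := by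
  funext n
  have := congrFun h (n + w.length)
  rwa [cat_add, cat_add] at this

lemma length_eq_of_cat_eq {u u' : List Bool} (h : ∀ z : Cantor, cat u z = cat u' z) :
    u.length = u'.length := by
  by_contra hne
  rcases Nat.lt_or_ge u.length u'.length with hlt | hge
  · have h1 := congrFun (h (fun _ => true)) u.length
    have h2 := congrFun (h (fun _ => false)) u.length
    rw [cat_ge _ _ le_rfl, cat_lt _ _ hlt] at h1
    rw [cat_ge _ _ le_rfl, cat_lt _ _ hlt] at h2
    rw [← h2] at h1; simp at h1
  · have hlt : u'.length < u.length := by omega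
    have h1 := congrFun (h (fun _ => true)) u'.length
    have h2 := congrFun (h (fun _ => false)) u'.length
    rw [cat_ge _ _ le_rfl, cat_lt _ _ hlt] at h1
    rw [cat_ge _ _ le_rfl, cat_lt _ _ hlt] at h2
    rw [h2] at h1; simp at h1

lemma prefix_split {m m' : List Bool} {y y' : Cantor} (h : cat m y = cat m' y')
    (hle : m.length ≤ m'.length) : ∃ t : List Bool, m' = m ++ t ∧ y = cat t y' := by
  refine ⟨m'.drop m.length, ?_, ?_⟩
  · have htake : m'.take m.length = m := by
      apply List.ext_getElem (by simp; omega)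
      intro i h1 h2
      have hi : i < m.length := by simp at h1; exact h1.1
      have := congrFun h i
      rw [cat_lt _ _ hi, cat_lt _ _ (by omega)] at this
      rw [List.getD_eq_getElem _ _ hi, List.getD_eq_getElem _ _ (by omega)] at this
      simp [this]
    conv_lhs => rw [← List.take_append_drop m.length m', htake]
  · funext n
    have := congrFun h (n + m.length)
    rw [cat_add] at this
    rw [this]
    rcases lt_or_ge (n + m.length) m'.length with h2 | h2
    · rw [cat_lt _ _ h2, cat_lt _ _ (by simp; omega)]
      rw [List.getD_eq_getElem _ _ h2, List.getD_eq_getElem _ _ (by simp; omega)]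
      rw [List.getElem_drop]
      congr 1; omega
    · rw [cat_ge _ _ h2, cat_ge _ _ (by simp; omega)]
      congr 1; simp; omega

lemma mem_cyl_iff {w : List Bool} {x : Cantor} :
    x ∈ cyl w ↔ ∀ i, i < w.length → x i = w.getD i false := by
  constructor
  · rintro ⟨y, rfl⟩ i hi; exact cat_lt _ _ hi
  · intro h
    refine ⟨shiftC w.length x, ?_⟩
    funext n
    rcases lt_or_ge n w.length with h1 | h1
    · rw [cat_lt _ _ h1]; exact h n h1
    · rw [cat_ge _ _ h1]; simp [shiftC]; congr 1; omega


/-! slope lemmas -/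

lemma hasLogSlope_unique_aux {v : Cantor ≃ₜ Cantor} {x : Cantor} {k k' : ℤ}
    {m w : List Bool} {y : Cantor} {m' w' : List Bool} {y' : Cantor}
    (hx : x = cat m y) (hw : ∀ z, v (cat m z) = cat w z) (hk : k = (m.length : ℤ) - w.length)
    (hx' : x = cat m' y') (hw' : ∀ z, v (cat m' z) = cat w' z)
    (hk' : k' = (m'.length : ℤ) - w'.length) (hle : m.length ≤ m'.length) : k = k' := by
  obtain ⟨t, rfl, hy⟩ := prefix_split (hx ▸ hx') hle
  have hww : ∀ z, cat (w ++ t) z = cat w' z := by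
    intro z
    rw [cat_append, ← hw (cat t z), ← cat_append, hw' z]
  have := length_eq_of_cat_eq hww
  subst hk; subst hk'
  simp at this ⊢
  omega

lemma hasLogSlope_unique {v : Cantor ≃ₜ Cantor} {x : Cantor} {k k' : ℤ}
    (h : HasLogSlope v x k) (h' : HasLogSlope v x k') : k = k' := by
  obtain ⟨m, w, y, hx, hw, hk⟩ := h
  obtain ⟨m', w', y', hx', hw', hk'⟩ := h'
  rcases le_total m.length m'.length with hle | hle
  · exact hasLogSlope_unique_aux hx hw hk hx' hw' hk' hle
  · exact (hasLogSlope_unique_aux hx' hw' hk' hx hw hk hle).symm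

lemma logSlope_eq {v : Cantor ≃ₜ Cantor} {x : Cantor} {k : ℤ} (h : HasLogSlope v x k) :
    logSlope v x = k := by
  have he : ∃ k : ℤ, HasLogSlope v x k := ⟨k, h⟩
  rw [logSlope, dif_pos he]
  exact hasLogSlope_unique he.choose_spec h

lemma memV_hasLogSlope {v : Cantor ≃ₜ Cantor} (hv : memV v) (x : Cantor) :
    HasLogSlope v x (logSlope v x) := by
  obtain ⟨m, w, y, hx, hw⟩ := hv x
  have h : HasLogSlope v x ((m.length : ℤ) - w.length) := ⟨m, w, y, hx, hw, rfl⟩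
  rwa [logSlope_eq h]

lemma hasLogSlope_comp {v w : Cantor ≃ₜ Cantor} {x : Cantor} {k₁ k₂ : ℤ}
    (h₁ : HasLogSlope w x k₁) (h₂ : HasLogSlope v (w x) k₂) :
    HasLogSlope (w.trans v) x (k₁ + k₂) := by
  obtain ⟨m, u, y, hx, hw, hk₁⟩ := h₁
  obtain ⟨m', u', y', hx', hv, hk₂⟩ := h₂
  have hwx : cat u y = cat m' y' := by rw [← hw y, ← hx, ← hx']
  rcases le_total u.length m'.length with hle | hle
  · obtain ⟨t, rfl, hy⟩ := prefix_split hwx hle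
    refine ⟨m ++ t, u', y', ?_, ?_, ?_⟩
    · rw [cat_append, ← hy, hx]
    · intro z
      simp only [Homeomorph.trans_apply]
      rw [cat_append, hw, ← cat_append, hv]
    · simp only [List.length_append, Nat.cast_add] at hk₁ hk₂ ⊢; omega
  · obtain ⟨t, rfl, hy'⟩ := prefix_split hwx.symm hle
    refine ⟨m, u' ++ t, y, hx, ?_, ?_⟩
    · intro z
      simp only [Homeomorph.trans_apply]
      rw [hw, cat_append, hv, ← cat_append]
    · simp only [List.length_append, Nat.cast_add] at hk₁ hk₂ ⊢; omega

lemma memV_refl : memV (Homeomorph.refl Cantor) := by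
  intro x
  exact ⟨[], [], x, (cat_nil x).symm, fun z => rfl⟩

lemma memV_symm {v : Cantor ≃ₜ Cantor} (hv : memV v) : memV v.symm := by
  intro x
  obtain ⟨m, w, y, hx, hw⟩ := hv (v.symm x)
  refine ⟨w, m, y, ?_, ?_⟩
  · have : v (v.symm x) = x := v.apply_symm_apply x
    rw [← this, hx, hw]
  · intro z
    have : v.symm (v (cat m z)) = cat m z := v.symm_apply_apply _
    rw [hw z] at this
    exact this

lemma memV_trans {v w : Cantor ≃ₜ Cantor} (hv : memV v) (hw : memV w) :
    memV (w.trans v) := by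
  intro x
  obtain ⟨m, u, y, hx, hh, hk⟩ := hasLogSlope_comp (memV_hasLogSlope hw x)
    (memV_hasLogSlope hv (w x))
  exact ⟨m, u, y, hx, hh⟩

lemma logSlope_comp {v w : Cantor ≃ₜ Cantor} (hv : memV v) (hw : memV w) (x : Cantor) :
    logSlope (w.trans v) x = logSlope w x + logSlope v (w x) :=
  logSlope_eq (hasLogSlope_comp (memV_hasLogSlope hw x) (memV_hasLogSlope hv (w x)))

lemma logSlope_refl (x : Cantor) : logSlope (Homeomorph.refl Cantor) x = 0 :=
  logSlope_eq ⟨[], [], x, (cat_nil x).symm, fun _ => rfl, by simp⟩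

/-! DependsOn and IsLC -/

def listTake (x : Cantor) (n : ℕ) : List Bool := List.ofFn (fun i : Fin n => x i)

@[simp] lemma listTake_length (x : Cantor) (n : ℕ) : (listTake x n).length = n := by
  simp [listTake]

lemma listTake_getD (x : Cantor) (n : ℕ) {i : ℕ} (h : i < n) :
    (listTake x n).getD i false = x i := by
  rw [List.getD_eq_getElem _ _ (by simp [h])]
  simp [listTake]

lemma cat_listTake (x : Cantor) (n : ℕ) : x = cat (listTake x n) (shiftC n x) := by
  funext k
  rcases lt_or_ge k n with h | h
  · rw [cat_lt _ _ (by simpa using h), listTake_getD x n h]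
  · rw [cat_ge _ _ (by simpa using h)]
    simp [shiftC]; congr 1; omega

lemma listTake_eq_of_agree {x x' : Cantor} {n : ℕ} (h : ∀ i, i < n → x i = x' i) :
    listTake x n = listTake x' n := by
  apply List.ext_getElem (by simp)
  intro i h1 h2
  simp only [listTake, List.getElem_ofFn]
  exact h i (by simpa using h1)

lemma listTake_cat {m : List Bool} {y : Cantor} {M : ℕ} (h : m.length ≤ M) :
    listTake (cat m y) M = m ++ listTake y (M - m.length) := by
  apply List.ext_getElem (by simp; omega)
  intro i h1 h2
  simp only [listTake, List.getElem_ofFn]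
  rcases lt_or_ge i m.length with hi | hi
  · rw [List.getElem_append_left hi, cat_lt _ _ hi, List.getD_eq_getElem _ _ hi]
  · rw [List.getElem_append_right hi, cat_ge _ _ hi]
    simp only [listTake, List.getElem_ofFn]

def DependsOnC {Γ : Type*} (f : Cantor → Γ) (N : ℕ) : Prop :=
  ∀ x x' : Cantor, (∀ i, i < N → x i = x' i) → f x = f x'

def allWords : ℕ → Finset (List Bool)
  | 0 => {[]}
  | (n+1) => (allWords n).image (List.cons false) ∪ (allWords n).image (List.cons true)

lemma mem_allWords {n : ℕ} {w : List Bool} : w ∈ allWords n ↔ w.length = n := by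
  induction n generalizing w with
  | zero => simp [allWords, List.length_eq_zero_iff]
  | succ n ih =>
    simp only [allWords, Finset.mem_union, Finset.mem_image]
    constructor
    · rintro (⟨u, hu, rfl⟩ | ⟨u, hu, rfl⟩) <;> simp [ih.mp hu]
    · intro h
      cases w with
      | nil => simp at h
      | cons b u =>
        have : u.length = n := by simpa using h
        cases b
        · exact Or.inl ⟨u, ih.mpr this, rfl⟩
        · exact Or.inr ⟨u, ih.mpr this, rfl⟩

lemma isSDP_allWords (N : ℕ) : IsSDP (allWords N) := by
  intro x
  refine ⟨listTake x N, ⟨mem_allWords.mpr (by simp), ⟨shiftC N x, cat_listTake x N⟩⟩, ?_⟩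
  rintro w ⟨hw, hx⟩
  have hlen : w.length = N := mem_allWords.mp hw
  rw [mem_cyl_iff] at hx
  apply List.ext_getElem (by simp [hlen])
  intro i h1 h2
  have := hx i h1
  rw [List.getD_eq_getElem _ _ h1] at this
  simp only [listTake, List.getElem_ofFn]
  rw [← this]

lemma isLC_iff_dependsOn {Γ : Type*} {f : Cantor → Γ} :
    IsLC f ↔ ∃ N, DependsOnC f N := by
  constructor
  · rintro ⟨P, hP, hf⟩
    refine ⟨P.sup List.length, ?_⟩
    intro x x' hagree
    obtain ⟨w, ⟨hwP, hwx⟩, _⟩ := hP x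
    have hlen : w.length ≤ P.sup List.length := Finset.le_sup hwP
    have hwx' : x' ∈ cyl w := by
      rw [mem_cyl_iff] at hwx ⊢
      intro i hi
      rw [← hagree i (by omega)]
      exact hwx i hi
    obtain ⟨y, rfl⟩ := hwx
    obtain ⟨y', rfl⟩ := hwx'
    exact hf w hwP y y'
  · rintro ⟨N, hN⟩
    refine ⟨allWords N, isSDP_allWords N, ?_⟩
    intro w hw y z
    have hlen : w.length = N := mem_allWords.mp hw
    apply hN
    intro i hi
    rw [cat_lt _ _ (by omega), cat_lt _ _ (by omega)]

lemma isLC_const {Γ : Type*} (c : Γ) : IsLC (fun _ : Cantor => c) :=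
  isLC_iff_dependsOn.mpr ⟨0, fun _ _ _ => rfl⟩

lemma isLC_mul {Γ : Type*} [Group Γ] {a b : Cantor → Γ} (ha : IsLC a) (hb : IsLC b) :
    IsLC (fun x => a x * b x) := by
  obtain ⟨N, hN⟩ := isLC_iff_dependsOn.mp ha
  obtain ⟨M, hM⟩ := isLC_iff_dependsOn.mp hb
  refine isLC_iff_dependsOn.mpr ⟨max N M, ?_⟩
  intro x x' h
  show a x * b x = a x' * b x'
  rw [hN x x' (fun i hi => h i (by omega)), hM x x' (fun i hi => h i (by omega))]

/-! compactness: uniform prefix replacement -/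

lemma isOpen_cyl (w : List Bool) : IsOpen (cyl w) := by
  have : cyl w = ⋂ i ∈ Finset.range w.length, {x : Cantor | x i = w.getD i false} := by
    ext x
    simp only [Set.mem_iInter, Finset.mem_range, Set.mem_setOf_eq, mem_cyl_iff]
  rw [this]
  apply isOpen_biInter_finset
  intro i _
  have he : {x : Cantor | x i = w.getD i false} = (fun x : Cantor => x i) ⁻¹' {w.getD i false} :=
    rfl
  rw [he]
  exact IsOpen.preimage (continuous_apply i) (isOpen_discrete _)

lemma memV_uniform {v : Cantor ≃ₜ Cantor} (hv : memV v) :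
    ∃ M : ℕ, ∀ x : Cantor, ∃ w : List Bool, ∀ z, v (cat (listTake x M) z) = cat w z := by
  choose m w y hxy hvz using hv
  have hcover : (Set.univ : Set Cantor) ⊆ ⋃ x : Cantor, cyl (m x) := by
    intro x _
    exact Set.mem_iUnion.mpr ⟨x, y x, hxy x⟩
  obtain ⟨t, ht⟩ := isCompact_univ.elim_finite_subcover (fun x => cyl (m x))
    (fun x => isOpen_cyl (m x)) hcover
  refine ⟨t.sup (fun i => (m i).length), ?_⟩
  intro x
  obtain ⟨i, hit, hxi⟩ := by
    have := ht (Set.mem_univ x)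
    simpa using this
  set M := t.sup (fun i => (m i).length) with hM
  have hle : (m i).length ≤ M := Finset.le_sup (f := fun i => (m i).length) hit
  obtain ⟨y', rfl⟩ := hxi
  rw [listTake_cat hle]
  refine ⟨w i ++ listTake y' (M - (m i).length), ?_⟩
  intro z
  rw [cat_append, hvz, ← cat_append]

lemma isLC_comp_symm {Γ : Type*} {b : Cantor → Γ} {v : Cantor ≃ₜ Cantor}
    (hb : IsLC b) (hv : memV v) : IsLC (fun x => b (v.symm x)) := by
  obtain ⟨N, hN⟩ := isLC_iff_dependsOn.mp hb
  obtain ⟨M, hM⟩ := memV_uniform (memV_symm hv)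
  refine isLC_iff_dependsOn.mpr ⟨M + N, ?_⟩
  intro x x' h
  obtain ⟨w, hw⟩ := hM x
  have hxx : listTake x M = listTake x' M := listTake_eq_of_agree (fun i hi => h i (by omega))
  have h1 : v.symm x = cat w (shiftC M x) := by
    conv_lhs => rw [cat_listTake x M]
    exact hw _
  have h2 : v.symm x' = cat w (shiftC M x') := by
    conv_lhs => rw [cat_listTake x' M, ← hxx]
    exact hw _
  show b (v.symm x) = b (v.symm x')
  rw [h1, h2]
  apply hN
  intro i hi
  rcases lt_or_ge i w.length with h3 | h3
  · rw [cat_lt _ _ h3, cat_lt _ _ h3]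
  · rw [cat_ge _ _ h3, cat_ge _ _ h3]
    simp only [shiftC]
    exact h _ (by omega)

lemma isLC_zpow_logSlope {Γ : Type*} [Group Γ] (g : Γ) {v : Cantor ≃ₜ Cantor} (hv : memV v) :
    IsLC (fun x => g ^ (logSlope v (v.symm x))) := by
  obtain ⟨M, hM⟩ := memV_uniform (memV_symm hv)
  refine isLC_iff_dependsOn.mpr ⟨M, ?_⟩
  intro x x' h
  obtain ⟨w, hw⟩ := hM x
  have hxx : listTake x M = listTake x' M := listTake_eq_of_agree h
  have key : ∀ u : Cantor, logSlope v (v.symm (cat (listTake x M) u)) = (w.length : ℤ) - M := by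
    intro u
    apply logSlope_eq
    refine ⟨w, listTake x M, u, (hw u).symm ▸ rfl, ?_, by simp⟩
    · intro z
      have := hw z
      have h2 : v (v.symm (cat (listTake x M) z)) = cat (listTake x M) z :=
        v.apply_symm_apply _
      rw [this] at h2
      exact h2
  have e1 : logSlope v (v.symm x) = (w.length : ℤ) - M := by
    conv_lhs => rw [cat_listTake x M]
    exact key _
  have e2 : logSlope v (v.symm x') = (w.length : ℤ) - M := by
    conv_lhs => rw [cat_listTake x' M, ← hxx]
    exact key _
  show g ^ logSlope v (v.symm x) = g ^ logSlope v (v.symm x')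
  rw [e1, e2]

section GroupPart
variable {Γ : Type*} [Group Γ]


lemma alphaWord_refl (m : List Bool) :
    alphaWord (MulEquiv.refl Γ) (MulEquiv.refl Γ) m = MulEquiv.refl Γ := by
  induction m with
  | nil => rfl
  | cons b t ih =>
    show alphaWord _ _ (b :: t) = _
    rw [alphaWord] at ih ⊢
    simp only [List.foldl_cons]
    cases b <;> exact ih

lemma tauEquiv_refl (v : Cantor ≃ₜ Cantor) (x : Cantor) :
    tauEquiv (MulEquiv.refl Γ) (MulEquiv.refl Γ) v x = MulEquiv.refl Γ := by
  rw [tauEquiv]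
  split
  · rw [alphaWord_refl, alphaWord_refl]
    exact MulEquiv.ext fun g => rfl
  · rfl

lemma permOfU_apply (a : Cantor → Γ) (v : Cantor ≃ₜ Cantor) (x : Cantor) (g : Γ) :
    permOfU a v (x, g) = (v x, a (v x) * g) := by
  show permOf _ _ a v (x, g) = _
  simp [permOf, tauEquiv_refl]

lemma permOfU_one : permOfU (fun _ : Cantor => (1 : Γ)) (Homeomorph.refl Cantor) = 1 := by
  apply Equiv.ext
  rintro ⟨x, g⟩
  rw [permOfU_apply]
  simp

lemma permOfU_mul (a b : Cantor → Γ) (v w : Cantor ≃ₜ Cantor) :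
    permOfU a v * permOfU b w = permOfU (fun y => a y * b (v.symm y)) (w.trans v) := by
  apply Equiv.ext
  rintro ⟨x, g⟩
  rw [Equiv.Perm.mul_apply, permOfU_apply, permOfU_apply, permOfU_apply]
  simp [mul_assoc]

lemma permOfU_inj {a a' : Cantor → Γ} {v v' : Cantor ≃ₜ Cantor}
    (h : permOfU a v = permOfU a' v') : a = a' ∧ v = v' := by
  have hv : ∀ x, v x = v' x := by
    intro x
    have h2 : permOfU a v (x, 1) = permOfU a' v' (x, 1) := by rw [h]
    rw [permOfU_apply, permOfU_apply] at h2
    exact congrArg Prod.fst h2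
  have hveq : v = v' := Homeomorph.ext hv
  subst hveq
  refine ⟨funext fun y => ?_, rfl⟩
  have h2 : permOfU a v (v.symm y, 1) = permOfU a' v (v.symm y, 1) := by rw [h]
  rw [permOfU_apply, permOfU_apply] at h2
  have := congrArg Prod.snd h2
  simpa [v.apply_symm_apply] using this

lemma permOfU_inv (a : Cantor → Γ) (v : Cantor ≃ₜ Cantor) :
    (permOfU a v)⁻¹ = permOfU (fun y => (a (v y))⁻¹) v.symm := by
  rw [inv_eq_iff_mul_eq_one, permOfU_mul]
  have h1 : (fun y => a y * (a (v (v.symm y)))⁻¹) = (fun _ : Cantor => (1 : Γ)) := by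
    funext y; simp
  have h2 : v.symm.trans v = Homeomorph.refl Cantor := by
    ext x; simp
  rw [h1, h2, permOfU_one]

lemma mem_GsubU {p : Equiv.Perm (Cantor × Γ)} :
    p ∈ GsubU Γ ↔ ∃ a v, IsLC a ∧ memV v ∧ p = permOfU a v := by
  constructor
  · intro hp
    refine Subgroup.closure_induction ?_ ?_ ?_ ?_ hp
    · exact fun q hq => hq
    · exact ⟨(fun _ => 1), Homeomorph.refl Cantor, isLC_const 1, memV_refl, permOfU_one.symm⟩
    · rintro p q - - ⟨a, v, ha, hv, rfl⟩ ⟨b, w, hb, hw, rfl⟩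
      exact ⟨(fun y => a y * b (v.symm y)), w.trans v,
        isLC_mul ha (isLC_comp_symm hb hv), memV_trans hv hw, permOfU_mul a b v w⟩
    · rintro p - ⟨a, v, ha, hv, rfl⟩
      refine ⟨(fun y => (a (v y))⁻¹), v.symm, ?_, memV_symm hv, permOfU_inv a v⟩
      have : IsLC (fun y => a (v.symm.symm y)) := isLC_comp_symm ha (memV_symm hv)
      simp only [Homeomorph.symm_symm] at this
      obtain ⟨N, hN⟩ := isLC_iff_dependsOn.mp this
      exact isLC_iff_dependsOn.mpr ⟨N, fun x x' h => congrArg (·⁻¹) (hN x x' h)⟩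
  · rintro ⟨a, v, ha, hv, rfl⟩
    exact Subgroup.subset_closure ⟨a, v, ha, hv, rfl⟩

end GroupPart

/-! the element v₀ of V with nonzero slope -/


lemma shiftC_cat (w : List Bool) (z : Cantor) : shiftC w.length (cat w z) = z := by
  funext n; exact cat_add w z n

lemma eq_cat_one {x : Cantor} {b : Bool} (h : x 0 = b) : x = cat [b] (shiftC 1 x) := by
  funext n
  match n with
  | 0 => simpa [cat] using h
  | (n+1) => simp [cat, shiftC]

lemma eq_cat_two {x : Cantor} {b c : Bool} (h0 : x 0 = b) (h1 : x 1 = c) :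
    x = cat [b, c] (shiftC 2 x) := by
  funext n
  match n with
  | 0 => simpa [cat] using h0
  | 1 => simpa [cat] using h1
  | (n+2) => simp [cat, shiftC]

def e0fun (x : Cantor) : Cantor :=
  if x 0 = false then cat [false, false] (shiftC 1 x)
  else if x 1 = false then cat [false, true] (shiftC 2 x)
  else cat [true] (shiftC 2 x)

def e0inv (y : Cantor) : Cantor :=
  if y 0 = false then
    (if y 1 = false then cat [false] (shiftC 2 y) else cat [true, false] (shiftC 2 y))
  else cat [true, true] (shiftC 1 y)

lemma cat_at0 (b : Bool) (t : List Bool) (z : Cantor) : cat (b :: t) z 0 = b := by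
  simp [cat]

lemma cat_at1 (b c : Bool) (t : List Bool) (z : Cantor) : cat (b :: c :: t) z 1 = c := by
  simp [cat]

lemma e0_c0 (z : Cantor) : e0fun (cat [false] z) = cat [false, false] z := by
  rw [e0fun, if_pos (cat_at0 false [] z)]
  exact congrArg _ (shiftC_cat [false] z)

lemma e0_c10 (z : Cantor) : e0fun (cat [true, false] z) = cat [false, true] z := by
  rw [e0fun, if_neg (by rw [cat_at0]; simp), if_pos (cat_at1 true false [] z)]
  exact congrArg _ (shiftC_cat [true, false] z)

lemma e0_c11 (z : Cantor) : e0fun (cat [true, true] z) = cat [true] z := by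
  rw [e0fun, if_neg (by rw [cat_at0]; simp), if_neg (by rw [cat_at1]; simp)]
  exact congrArg _ (shiftC_cat [true, true] z)

lemma e0i_c00 (z : Cantor) : e0inv (cat [false, false] z) = cat [false] z := by
  rw [e0inv, if_pos (cat_at0 false [false] z), if_pos (cat_at1 false false [] z)]
  exact congrArg _ (shiftC_cat [false, false] z)

lemma e0i_c01 (z : Cantor) : e0inv (cat [false, true] z) = cat [true, false] z := by
  rw [e0inv, if_pos (cat_at0 false [true] z), if_neg (by rw [cat_at1]; simp)]
  exact congrArg _ (shiftC_cat [false, true] z)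

lemma e0i_c1 (z : Cantor) : e0inv (cat [true] z) = cat [true, true] z := by
  rw [e0inv, if_neg (by rw [cat_at0]; simp)]
  exact congrArg _ (shiftC_cat [true] z)

def e0 : Cantor ≃ Cantor where
  toFun := e0fun
  invFun := e0inv
  left_inv := by
    intro x
    cases hx0 : x 0
    · conv_lhs => rw [eq_cat_one hx0, e0_c0, e0i_c00]
      exact (eq_cat_one hx0).symm
    · cases hx1 : x 1
      · conv_lhs => rw [eq_cat_two hx0 hx1, e0_c10, e0i_c01]
        exact (eq_cat_two hx0 hx1).symm
      · conv_lhs => rw [eq_cat_two hx0 hx1, e0_c11, e0i_c1]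
        exact (eq_cat_two hx0 hx1).symm
  right_inv := by
    intro y
    cases hy0 : y 0
    · cases hy1 : y 1
      · conv_lhs => rw [eq_cat_two hy0 hy1, e0i_c00, e0_c0]
        exact (eq_cat_two hy0 hy1).symm
      · conv_lhs => rw [eq_cat_two hy0 hy1, e0i_c01, e0_c10]
        exact (eq_cat_two hy0 hy1).symm
    · conv_lhs => rw [eq_cat_one hy0, e0i_c1, e0_c11]
      exact (eq_cat_one hy0).symm

lemma continuous_cat_comp (w : List Bool) (k : ℕ) :
    Continuous (fun z : Cantor => cat w (shiftC k z)) := by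
  apply continuous_pi
  intro n
  unfold cat
  split
  · exact continuous_const
  · exact continuous_apply _

lemma continuous_of_PR {f : Cantor → Cantor}
    (h : ∀ x, ∃ m w : List Bool, x ∈ cyl m ∧ ∀ z, f (cat m z) = cat w z) :
    Continuous f := by
  rw [continuous_iff_continuousAt]
  intro x
  obtain ⟨m, w, hx, hf⟩ := h x
  apply ContinuousAt.congr ((continuous_cat_comp w m.length).continuousAt)
  have hmem : cyl m ∈ nhds x := (isOpen_cyl m).mem_nhds hx
  filter_upwards [hmem] with y hy
  obtain ⟨z, rfl⟩ := hy
  rw [hf z, shiftC_cat]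

lemma e0fun_PR : ∀ x : Cantor, ∃ m w : List Bool,
    x ∈ cyl m ∧ ∀ z, e0fun (cat m z) = cat w z := by
  intro x
  cases hx0 : x 0
  · exact ⟨[false], [false, false], ⟨shiftC 1 x, eq_cat_one hx0⟩, e0_c0⟩
  · cases hx1 : x 1
    · exact ⟨[true, false], [false, true], ⟨shiftC 2 x, eq_cat_two hx0 hx1⟩, e0_c10⟩
    · exact ⟨[true, true], [true], ⟨shiftC 2 x, eq_cat_two hx0 hx1⟩, e0_c11⟩

lemma e0inv_PR : ∀ y : Cantor, ∃ m w : List Bool,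
    y ∈ cyl m ∧ ∀ z, e0inv (cat m z) = cat w z := by
  intro y
  cases hy0 : y 0
  · cases hy1 : y 1
    · exact ⟨[false, false], [false], ⟨shiftC 2 y, eq_cat_two hy0 hy1⟩, e0i_c00⟩
    · exact ⟨[false, true], [true, false], ⟨shiftC 2 y, eq_cat_two hy0 hy1⟩, e0i_c01⟩
  · exact ⟨[true], [true, true], ⟨shiftC 1 y, eq_cat_one hy0⟩, e0i_c1⟩

def v0 : Cantor ≃ₜ Cantor where
  toEquiv := e0
  continuous_toFun := continuous_of_PR e0fun_PR
  continuous_invFun := continuous_of_PR e0inv_PR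

lemma v0_apply (x : Cantor) : v0 x = e0fun x := rfl

lemma memV_v0 : memV v0 := by
  intro x
  obtain ⟨m, w, ⟨y, hy⟩, hf⟩ := e0fun_PR x
  exact ⟨m, w, y, hy, fun z => hf z⟩

lemma logSlope_v0 : logSlope v0 (cat [true, true] zeroSeq) = 1 := by
  apply logSlope_eq
  exact ⟨[true, true], [true], zeroSeq, rfl, fun z => e0_c11 z, by norm_num⟩

/-! the action F -/

section Faction
variable {Γ : Type*} [Group Γ]

lemma exists_data (p : ↥(GsubU Γ)) : ∃ q : (Cantor → Γ) × (Cantor ≃ₜ Cantor),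
    IsLC q.1 ∧ memV q.2 ∧ (p : Equiv.Perm (Cantor × Γ)) = permOfU q.1 q.2 := by
  obtain ⟨a, v, ha, hv, hp⟩ := mem_GsubU.mp p.2
  exact ⟨(a, v), ha, hv, hp⟩

noncomputable def aOf (p : ↥(GsubU Γ)) : Cantor → Γ := (exists_data p).choose.1
noncomputable def vOf (p : ↥(GsubU Γ)) : Cantor ≃ₜ Cantor := (exists_data p).choose.2

lemma isLC_aOf (p : ↥(GsubU Γ)) : IsLC (aOf p) := (exists_data p).choose_spec.1
lemma memV_vOf (p : ↥(GsubU Γ)) : memV (vOf p) := (exists_data p).choose_spec.2.1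
lemma dataOf_spec (p : ↥(GsubU Γ)) :
    (p : Equiv.Perm (Cantor × Γ)) = permOfU (aOf p) (vOf p) :=
  (exists_data p).choose_spec.2.2

noncomputable def FelP (ζ : Γ) (p : ↥(GsubU Γ)) : Equiv.Perm (Cantor × Γ) :=
  permOfU (fun x => ζ ^ (logSlope (vOf p) ((vOf p).symm x)) * aOf p x) (vOf p)

lemma FelP_mem (ζ : Γ) (p : ↥(GsubU Γ)) : FelP ζ p ∈ GsubU Γ :=
  mem_GsubU.mpr ⟨_, _, isLC_mul (isLC_zpow_logSlope ζ (memV_vOf p)) (isLC_aOf p),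
    memV_vOf p, rfl⟩

noncomputable def Fel (ζ : Γ) (p : ↥(GsubU Γ)) : ↥(GsubU Γ) := ⟨FelP ζ p, FelP_mem ζ p⟩

lemma Fel_val (ζ : Γ) {a : Cantor → Γ} {v : Cantor ≃ₜ Cantor} (p : ↥(GsubU Γ))
    (hp : (p : Equiv.Perm (Cantor × Γ)) = permOfU a v) :
    (Fel ζ p : Equiv.Perm (Cantor × Γ)) =
      permOfU (fun x => ζ ^ (logSlope v (v.symm x)) * a x) v := by
  obtain ⟨ha, hv⟩ := permOfU_inj ((dataOf_spec p).symm.trans hp)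
  show FelP ζ p = _
  rw [FelP, ha, hv]

lemma Fel_mem_perm (ζ : Γ) {a : Cantor → Γ} {v : Cantor ≃ₜ Cantor}
    (ha : IsLC a) (hv : memV v) :
    permOfU (fun x => ζ ^ (logSlope v (v.symm x)) * a x) v ∈ GsubU Γ :=
  mem_GsubU.mpr ⟨_, _, isLC_mul (isLC_zpow_logSlope ζ hv) ha, hv, rfl⟩

lemma Fel_mul {ζ : Γ} (hζ : ζ ∈ Subgroup.center Γ) (p q : ↥(GsubU Γ)) :
    Fel ζ (p * q) = Fel ζ p * Fel ζ q := by
  have hcomm : ∀ (k : ℤ) (g : Γ), Commute (ζ ^ k) g := fun k g =>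
    Commute.zpow_left ((Subgroup.mem_center_iff.mp hζ g).symm) k
  have hp := dataOf_spec p
  have hq := dataOf_spec q
  set a := aOf p; set v := vOf p; set b := aOf q; set w := vOf q
  have hpq : ((p * q : ↥(GsubU Γ)) : Equiv.Perm (Cantor × Γ)) =
      permOfU (fun y => a y * b (v.symm y)) (w.trans v) := by
    rw [Subgroup.coe_mul, hp, hq, permOfU_mul]
  apply Subtype.ext
  rw [Fel_val ζ (p * q) hpq, Subgroup.coe_mul, Fel_val ζ p hp, Fel_val ζ q hq, permOfU_mul]
  congr 1
  funext y
  have hsym : (w.trans v).symm y = w.symm (v.symm y) := by simp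
  have hslope : logSlope (w.trans v) ((w.trans v).symm y) =
      logSlope w (w.symm (v.symm y)) + logSlope v (v.symm y) := by
    rw [hsym, logSlope_comp (memV_vOf p) (memV_vOf q), w.apply_symm_apply]
  rw [hslope, add_comm, zpow_add]
  rw [((hcomm (logSlope w (w.symm (v.symm y))) (a y)).symm).mul_mul_mul_comm]

lemma Fel_inv_comp (ζ : Γ) (p : ↥(GsubU Γ)) : Fel ζ⁻¹ (Fel ζ p) = p := by
  have hp := dataOf_spec p
  apply Subtype.ext
  rw [Fel_val ζ⁻¹ (Fel ζ p) (Fel_val ζ p hp), hp]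
  congr 1
  funext x
  rw [inv_zpow, inv_mul_cancel_left]

noncomputable def Fauto (ζ : Subgroup.center Γ) : MulAut ↥(GsubU Γ) where
  toFun := Fel (ζ : Γ)
  invFun := Fel ((ζ : Γ)⁻¹)
  left_inv := Fel_inv_comp (ζ : Γ)
  right_inv := fun p => by
    have := Fel_inv_comp ((ζ : Γ)⁻¹) p
    rwa [inv_inv] at this
  map_mul' := Fel_mul ζ.2

noncomputable def FHom : Subgroup.center Γ →* MulAut ↥(GsubU Γ) where
  toFun := Fauto
  map_one' := by
    apply MulEquiv.ext
    intro p
    have hp := dataOf_spec p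
    show Fel (1 : Γ) p = p
    apply Subtype.ext
    rw [Fel_val (1 : Γ) p hp, hp]
    congr 1
    funext x
    rw [one_zpow, one_mul]
  map_mul' := by
    intro ζ η
    apply MulEquiv.ext
    intro p
    have hp := dataOf_spec p
    show Fel ((ζ : Γ) * η) p = Fel (ζ : Γ) (Fel (η : Γ) p)
    apply Subtype.ext
    rw [Fel_val ((ζ : Γ) * η) p hp,
      Fel_val (ζ : Γ) (Fel (η : Γ) p) (Fel_val (η : Γ) p hp)]
    congr 1
    funext x
    have hc : Commute (ζ : Γ) (η : Γ) := Subgroup.mem_center_iff.mp η.2 (ζ : Γ)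
    rw [hc.mul_zpow, mul_assoc]

lemma FHom_injective : Function.Injective (FHom (Γ := Γ)) := by
  rw [injective_iff_map_eq_one]
  intro ζ hζ1
  have hmem : permOfU (fun _ : Cantor => (1 : Γ)) v0 ∈ GsubU Γ :=
    mem_GsubU.mpr ⟨_, _, isLC_const 1, memV_v0, rfl⟩
  have h1 : FHom ζ ⟨permOfU (fun _ : Cantor => (1 : Γ)) v0, hmem⟩ =
      ⟨permOfU (fun _ : Cantor => (1 : Γ)) v0, hmem⟩ := by rw [hζ1]; rfl
  have h2 : (permOfU (fun x : Cantor => (ζ : Γ) ^ (logSlope v0 (v0.symm x)) * 1) v0 :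
      Equiv.Perm (Cantor × Γ)) = permOfU (fun _ : Cantor => (1 : Γ)) v0 := by
    rw [← Fel_val (ζ : Γ) ⟨permOfU (fun _ : Cantor => (1 : Γ)) v0, hmem⟩ rfl]
    exact congrArg _ h1
  have h3 := (permOfU_inj h2).1
  have h4 := congrFun h3 (v0 (cat [true, true] zeroSeq))
  simp only [v0.symm_apply_apply, logSlope_v0, zpow_one, mul_one] at h4
  exact Subtype.ext h4

end Faction


end AuxProof

/-- (Untwisted case `α₀ = α₁ = id`.)  For `ζ ∈ Z(Γ)`, the formula
`F_ζ(a·v) = ζ^{ℓ_v} · a · v` with `ℓ_v(x) = log₂ v'(v⁻¹x)` defines an automorphism of the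
untwisted fraction group `G = LΓ ⋊ V`, and `ζ ↦ F_ζ` is a faithful action of `Z(Γ)` on
`G` by automorphisms. -/
theorem slope_action_of_center (Γ : Type*) [Group Γ] :
    ∃ F : Subgroup.center Γ →* MulAut ↥(GsubU Γ),
      Function.Injective F ∧
      ∀ (ζ : Subgroup.center Γ) (a : Cantor → Γ) (v : Cantor ≃ₜ Cantor),
        IsLC a → memV v → ∀ h : permOfU a v ∈ GsubU Γ,
          ((F ζ ⟨permOfU a v, h⟩ : ↥(GsubU Γ)) : Equiv.Perm (Cantor × Γ)) =
            permOfU (fun x => (ζ : Γ) ^ (logSlope v (v.symm x)) * a x) v := by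
  refine ⟨FHom, FHom_injective, ?_⟩
  intro ζ a v ha hv h
  exact Fel_val (ζ : Γ) ⟨permOfU a v, h⟩ rfl
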